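/- For any three unit vectors ψ₁, ψ₂, ψ₃ in a complex inner product space, the Bargmann invariant Δ = ⟨ψ₁,ψ₂⟩⟨ψ₂,ψ₃⟩⟨ψ₃,ψ₁⟩ satisfies 1 − 3|Δ|^(2/3) + 2·Re(Δ) ≥ 0. -/

import Mathlib

/-- Any third-order Bargmann invariant `Δ` of three unit vectors satisfies
`1 - 3|Δ|^(2/3) + 2 Re Δ ≥ 0`. -/
theorem bargmann_three_bound
    (E : Type*) [NormedAddCommGroup E] [InnerProductSpace ℂ E]
    [FiniteDimensional ℂ E]
    (ψ₁ ψ₂ ψ₃ : E) (h₁ : ‖ψ₁‖ = 1) (h₂ : ‖ψ₂‖ = 1) (h₃ : ‖ψ₃‖ = 1)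
    (Δ : ℂ) (hΔ : Δ = (inner ℂ ψ₁ ψ₂ : ℂ) * (inner ℂ ψ₂ ψ₃ : ℂ) * (inner ℂ ψ₃ ψ₁ : ℂ)) :
    1 - 3 * ‖Δ‖ ^ ((2 : ℝ) / 3) + 2 * Δ.re ≥ 0 := by
  set a : ℂ := inner ℂ ψ₁ ψ₂ with ha
  set b : ℂ := inner ℂ ψ₂ ψ₃ with hb
  set c : ℂ := inner ℂ ψ₃ ψ₁ with hc
  have h11 : (inner ℂ ψ₁ ψ₁ : ℂ) = 1 := by
    rw [inner_self_eq_norm_sq_to_K, h₁]; norm_num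
  have h21 : (inner ℂ ψ₂ ψ₁ : ℂ) = starRingEnd ℂ a := by
    rw [ha, inner_conj_symm]
  have h13 : (inner ℂ ψ₁ ψ₃ : ℂ) = starRingEnd ℂ c := by
    rw [hc, inner_conj_symm]
  have h22 : (inner ℂ ψ₂ ψ₂ : ℂ) = 1 := by
    rw [inner_self_eq_norm_sq_to_K, h₂]; norm_num
  have h33 : (inner ℂ ψ₃ ψ₃ : ℂ) = 1 := by
    rw [inner_self_eq_norm_sq_to_K, h₃]; norm_num
  set u : E := ψ₂ - a • ψ₁ with hu
  set v : E := ψ₃ - (starRingEnd ℂ c) • ψ₁ with hv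
  have huv : (inner ℂ u v : ℂ) = b - starRingEnd ℂ a * starRingEnd ℂ c := by
    simp only [hu, hv, inner_sub_left, inner_sub_right, inner_smul_left, inner_smul_right,
      h11, h21, h13, ← hb]
    ring
  have huu : (inner ℂ u u : ℂ) = 1 - starRingEnd ℂ a * a := by
    simp only [hu, inner_sub_left, inner_sub_right, inner_smul_left, inner_smul_right,
      h11, h21, h22, ← ha]
    ring
  have hvv : (inner ℂ v v : ℂ) = 1 - starRingEnd ℂ c * c := by
    simp only [hv, inner_sub_left, inner_sub_right, inner_smul_left, inner_smul_right,
      h11, h13, h33, ← hc]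
    simp only [RingHomCompTriple.comp_apply, RingHom.id_apply]
    ring
  have hu2 : ‖u‖ ^ 2 = 1 - Complex.normSq a := by
    have := inner_self_eq_norm_sq (𝕜 := ℂ) u
    rw [huu] at this
    rw [← this]
    simp [Complex.normSq_apply, Complex.mul_re, Complex.conj_re, Complex.conj_im]
  have hv2 : ‖v‖ ^ 2 = 1 - Complex.normSq c := by
    have := inner_self_eq_norm_sq (𝕜 := ℂ) v
    rw [hvv] at this
    rw [← this]
    simp [Complex.normSq_apply, Complex.mul_re, Complex.conj_re, Complex.conj_im]
  have cs : ‖(inner ℂ u v : ℂ)‖ ≤ ‖u‖ * ‖v‖ := norm_inner_le_norm u v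
  have cs2 : ‖(inner ℂ u v : ℂ)‖ ^ 2 ≤ (1 - Complex.normSq a) * (1 - Complex.normSq c) := by
    calc ‖(inner ℂ u v : ℂ)‖ ^ 2 ≤ (‖u‖ * ‖v‖) ^ 2 := by
          exact pow_le_pow_left₀ (norm_nonneg _) cs 2
      _ = (1 - Complex.normSq a) * (1 - Complex.normSq c) := by
          rw [mul_pow, hu2, hv2]
  have key : Complex.normSq a + Complex.normSq b + Complex.normSq c ≤ 1 + 2 * Δ.re := by
    rw [huv] at cs2
    have hns : ‖(b - starRingEnd ℂ a * starRingEnd ℂ c : ℂ)‖ ^ 2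
        = Complex.normSq b + Complex.normSq a * Complex.normSq c - 2 * Δ.re := by
      rw [Complex.sq_norm, hΔ]
      simp only [Complex.normSq_apply, Complex.sub_re, Complex.sub_im, Complex.mul_re,
        Complex.mul_im, Complex.conj_re, Complex.conj_im]
      ring
    rw [hns] at cs2
    nlinarith [Complex.normSq_nonneg a, Complex.normSq_nonneg c]
  -- AM-GM step
  set x := ‖a‖ with hx
  set y := ‖b‖ with hy
  set z := ‖c‖ with hz
  have hxn : (0:ℝ) ≤ x := norm_nonneg a
  have hyn : (0:ℝ) ≤ y := norm_nonneg b
  have hzn : (0:ℝ) ≤ z := norm_nonneg c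
  have habs : ‖Δ‖ = x * y * z := by rw [hΔ, norm_mul, norm_mul]
  have hsq : Complex.normSq a = x ^ 2 ∧ Complex.normSq b = y ^ 2 ∧ Complex.normSq c = z ^ 2 :=
    ⟨(Complex.sq_norm a).symm, (Complex.sq_norm b).symm, (Complex.sq_norm c).symm⟩
  have amgm : (x * y * z) ^ ((2:ℝ)/3) * 3 ≤ x ^ 2 + y ^ 2 + z ^ 2 := by
    have h := Real.geom_mean_le_arith_mean3_weighted (w₁ := 1/3) (w₂ := 1/3) (w₃ := 1/3)
      (p₁ := x ^ 2) (p₂ := y ^ 2) (p₃ := z ^ 2) (by norm_num) (by norm_num) (by norm_num)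
      (sq_nonneg x) (sq_nonneg y) (sq_nonneg z) (by norm_num)
    have hrw : (x ^ 2) ^ ((1:ℝ)/3) * (y ^ 2) ^ ((1:ℝ)/3) * (z ^ 2) ^ ((1:ℝ)/3)
        = (x * y * z) ^ ((2:ℝ)/3) := by
      rw [Real.mul_rpow (mul_nonneg hxn hyn) hzn, Real.mul_rpow hxn hyn]
      rw [← Real.rpow_natCast x 2, ← Real.rpow_natCast y 2, ← Real.rpow_natCast z 2,
        ← Real.rpow_mul hxn, ← Real.rpow_mul hyn, ← Real.rpow_mul hzn]
      norm_num
    rw [hrw] at h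
    linarith
  rw [habs]
  obtain ⟨e1, e2, e3⟩ := hsq
  rw [e1, e2, e3] at key
  linarith
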